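/- arXiv:2208.12375 — 3 statements merged into one kernel-verified Lean document; each statement's English description precedes it below -/
import Mathlib

section
/- Let a=(a_1,...,a_n) and e=(e_1,...,e_n) be arbitrary real sequences. The matrix M_{e→a} is totally non-negative if and only if e is a restricted growth sequence relative to a (in the general algorithmic sense). -/
open Polynomial Finset

/-- A real square matrix is totally non-negative if every minor (determinant of a
square submatrix selected by strictly increasing row indices and strictly increasing
column indices) is non-negative. -/
def TNN {N : ℕ} (A : Matrix (Fin N) (Fin N) ℝ) : Prop :=
  ∀ (r : ℕ) (ρ γ : Fin r → Fin N), StrictMono ρ → StrictMono γ →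
    0 ≤ (A.submatrix ρ γ).det

/-- `IsCOB n a e M` says that `M` is the change-of-basis matrix `M_{e→a}`:
for each `0 ≤ m ≤ n`, the entry `M m k` is the coefficient of `∏_{i=1}^k (x - a_i)`
in the expansion of `∏_{i=1}^m (x - e_i)` in the basis
`1, (x-a₁), …, ∏_{i=1}^n (x-a_i)`.  (Sequences are 0-indexed: `a i` is `a_{i+1}`.)
Since that basis expansion is unique, this characterizes `M_{e→a}` uniquely. -/
def IsCOB (n : ℕ) (a e : ℕ → ℝ) (M : Matrix (Fin (n+1)) (Fin (n+1)) ℝ) : Prop :=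
  ∀ m : Fin (n+1),
    (∏ i ∈ Finset.range (m : ℕ), (X - C (e i))) =
      ∑ k : Fin (n+1), C (M m k) * ∏ i ∈ Finset.range (k : ℕ), (X - C (a i))

/-- One step of the algorithmic restricted-growth test: given `a_i` and the current
list `X`, find the first element of `X` that is `≥ a_i`; if none exists delete the
last element of `X`; if it equals `a_i` delete that occurrence; if it exceeds `a_i`,
fail (return `none`). -/
noncomputable def rgsStep (ai : ℝ) (Xl : List ℝ) : Option (List ℝ) :=
  match Xl.findIdx? (fun x => decide (ai ≤ x)) with
  | none => some Xl.dropLast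
  | some j => if Xl.getD j 0 = ai then some (Xl.eraseIdx j) else none

/-- Run the first `i` steps of the algorithm (with caps `a 0, a 1, …`), starting
from the list `Xl`. -/
noncomputable def rgsRun (a : ℕ → ℝ) (Xl : List ℝ) : ℕ → Option (List ℝ)
  | 0 => some Xl
  | i + 1 => (rgsRun a Xl i).bind (rgsStep (a i))

/-- `e` is a restricted growth sequence relative to `a` (general algorithmic sense):
the algorithm, started on the list `(e_1, …, e_n)`, completes all `n` steps without
failure. -/
def IsRGGen (n : ℕ) (a e : ℕ → ℝ) : Prop :=
  (rgsRun a (List.ofFn fun i : Fin n => e i) n).isSome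



noncomputable def cM (a e : ℕ → ℝ) : ℕ → ℕ → ℝ
  | 0, k => if k = 0 then 1 else 0
  | (m+1), k => (if k = 0 then 0 else cM a e m (k-1)) + (a k - e m) * cM a e m k

noncomputable def Qp (a : ℕ → ℝ) (k : ℕ) : Polynomial ℝ := ∏ i ∈ Finset.range k, (X - C (a i))

lemma Qp_monic (a : ℕ → ℝ) (k : ℕ) : (Qp a k).Monic :=
  monic_prod_of_monic _ _ fun i _ => monic_X_sub_C (a i)

lemma Qp_natDegree (a : ℕ → ℝ) (k : ℕ) : (Qp a k).natDegree = k := by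
  rw [Qp, Polynomial.natDegree_prod_of_monic _ _ (fun i _ => monic_X_sub_C (a i))]
  simp

lemma cM_tri (a e : ℕ → ℝ) : ∀ m k, m < k → cM a e m k = 0 := by
  intro m
  induction m with
  | zero => intro k hk; simp [cM]; omega
  | succ m ih =>
    intro k hk
    have h1 : cM a e m (k-1) = 0 := ih _ (by omega)
    have h2 : cM a e m k = 0 := ih _ (by omega)
    simp [cM, h1, h2]

lemma cM_expand (a e : ℕ → ℝ) (m : ℕ) :
    (∏ i ∈ Finset.range m, (X - C (e i))) = ∑ k ∈ Finset.range (m+1), C (cM a e m k) * Qp a k := by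
  induction m with
  | zero => simp [cM, Qp]
  | succ m ih =>
    rw [Finset.prod_range_succ, ih, Finset.sum_mul]
    have key : ∀ k, (C (cM a e m k) * Qp a k) * (X - C (e m))
        = C (cM a e m k) * Qp a (k+1) + C ((a k - e m) * cM a e m k) * Qp a k := by
      intro k
      have : Qp a (k+1) = Qp a k * (X - C (a k)) := by rw [Qp, Qp, Finset.prod_range_succ]
      rw [this, map_mul, map_sub]
      ring
    rw [Finset.sum_congr rfl (fun k _ => key k)]
    rw [Finset.sum_add_distrib]
    have e1 : ∑ k ∈ Finset.range (m+1), C (cM a e m k) * Qp a (k+1)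
        = ∑ k ∈ Finset.range (m+2), C (if k = 0 then 0 else cM a e m (k-1)) * Qp a k := by
      rw [Finset.sum_range_succ' (fun k => C (if k = 0 then 0 else cM a e m (k-1)) * Qp a k) (m+1)]
      simp
    have e2 : ∑ k ∈ Finset.range (m+1), C ((a k - e m) * cM a e m k) * Qp a k
        = ∑ k ∈ Finset.range (m+2), C ((a k - e m) * cM a e m k) * Qp a k := by
      rw [Finset.sum_range_succ (fun k => C ((a k - e m) * cM a e m k) * Qp a k) (m+1)]
      rw [cM_tri a e m (m+1) (by omega)]
      simp
    rw [e1, e2, ← Finset.sum_add_distrib]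
    apply Finset.sum_congr rfl
    intro k _
    rw [← add_mul, ← map_add]
    rfl

lemma cM_expand_upto (a e : ℕ → ℝ) (m K : ℕ) (h : m ≤ K) :
    (∏ i ∈ Finset.range m, (X - C (e i))) = ∑ k ∈ Finset.range (K+1), C (cM a e m k) * Qp a k := by
  rw [cM_expand a e m]
  apply Finset.sum_subset
  · intro k hk; simp at hk ⊢; omega
  · intro k _ hk
    simp only [Finset.mem_range, not_lt] at hk
    rw [cM_tri a e m k (by omega)]
    simp

lemma uniq (a : ℕ → ℝ) : ∀ (K : ℕ) (c : ℕ → ℝ),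
    (∑ k ∈ Finset.range K, C (c k) * Qp a k) = 0 → ∀ k < K, c k = 0 := by
  intro K
  induction K with
  | zero => intro c _ k hk; omega
  | succ K ih =>
    intro c h
    have hK : c K = 0 := by
      have hc := congrArg (fun p => Polynomial.coeff p K) h
      simp only [Polynomial.finset_sum_coeff, Polynomial.coeff_zero] at hc
      rw [Finset.sum_eq_single K] at hc
      · rw [Polynomial.coeff_C_mul] at hc
        have : (Qp a K).coeff K = 1 := by
          have := (Qp_monic a K).coeff_natDegree
          rwa [Qp_natDegree] at this
        rw [this, mul_one] at hc
        exact hc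
      · intro k hk hne
        rw [Polynomial.coeff_C_mul]
        have : (Qp a k).coeff K = 0 := by
          apply Polynomial.coeff_eq_zero_of_natDegree_lt
          rw [Qp_natDegree]
          simp at hk; omega
        rw [this, mul_zero]
      · intro h'; exact absurd (Finset.self_mem_range_succ K) h'
    have h' : (∑ k ∈ Finset.range K, C (c k) * Qp a k) = 0 := by
      rw [Finset.sum_range_succ, hK] at h
      simpa using h
    intro k hk
    rcases Nat.lt_succ_iff_lt_or_eq.mp hk with h1 | rfl
    · exact ih c h' k h1
    · exact hK

lemma cM_col0 (a e : ℕ → ℝ) : ∀ p, cM a e p 0 = ∏ s ∈ Finset.range p, (a 0 - e s) := by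
  intro p
  induction p with
  | zero => simp [cM]
  | succ p ih => rw [Finset.prod_range_succ, ← ih]; simp [cM]; ring

/-- The key relation: entries of the big matrix vs the reduced matrix. -/
lemma key_relation (a e e1 : ℕ → ℝ) (n j : ℕ)
    (h_agree : ∀ i, i < j → e1 i = e i)
    (h_tail : ∀ p, j < p → p ≤ n →
      (∏ i ∈ Finset.range p, (X - C (e i))) =
        (X - C (a 0)) * ∏ i ∈ Finset.range (p-1), (X - C (e1 i))) :
    ∀ p k, 1 ≤ p → p ≤ n → k ≤ n →
      cM a e p k = (if k = 0 then 0 else cM (fun i => a (i+1)) e1 (p-1) (k-1))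
        + (if p ≤ j then a 0 - e (p-1) else 0) * cM a e (p-1) k := by
  intro p k hp hpn hkn
  set a1 : ℕ → ℝ := fun i => a (i+1) with ha1
  set cp : ℝ := if p ≤ j then a 0 - e (p-1) else 0 with hcp
  -- polynomial identity
  have hpoly : (∏ i ∈ Finset.range p, (X - C (e i)))
      - C cp * (∏ i ∈ Finset.range (p-1), (X - C (e i)))
      = (X - C (a 0)) * ∏ i ∈ Finset.range (p-1), (X - C (e1 i)) := by
    by_cases hpj : p ≤ j
    · have hag : (∏ i ∈ Finset.range (p-1), (X - C (e1 i)))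
          = ∏ i ∈ Finset.range (p-1), (X - C (e i)) := by
        apply Finset.prod_congr rfl
        intro i hi
        simp only [Finset.mem_range] at hi
        rw [h_agree i (by omega)]
      rw [hag, hcp, if_pos hpj]
      have hps : p = (p-1) + 1 := by omega
      rw [hps, Finset.prod_range_succ]
      have : p - 1 + 1 - 1 = p - 1 := by omega
      rw [this, map_sub]
      ring
    · rw [hcp, if_neg hpj, map_zero, zero_mul, sub_zero]
      exact h_tail p (by omega) hpn
  -- expand both sides in the Qp a basis over range (n+1)
  have lhs_exp : (∏ i ∈ Finset.range p, (X - C (e i)))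
      - C cp * (∏ i ∈ Finset.range (p-1), (X - C (e i)))
      = ∑ k' ∈ Finset.range (n+1), C (cM a e p k' - cp * cM a e (p-1) k') * Qp a k' := by
    rw [cM_expand_upto a e p n hpn, cM_expand_upto a e (p-1) n (by omega), Finset.mul_sum,
      ← Finset.sum_sub_distrib]
    apply Finset.sum_congr rfl
    intro k' _
    rw [map_sub, map_mul]
    ring
  have rhs_exp : (X - C (a 0)) * (∏ i ∈ Finset.range (p-1), (X - C (e1 i)))
      = ∑ k' ∈ Finset.range (n+1), C (if k' = 0 then 0 else cM a1 e1 (p-1) (k'-1)) * Qp a k' := by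
    have hsmall : p - 1 ≤ n - 1 := by omega
    rw [cM_expand_upto a1 e1 (p-1) (n-1) hsmall, Finset.mul_sum]
    have hn1 : n - 1 + 1 = n := by omega
    rw [hn1]
    have hterm : ∀ k', (X - C (a 0)) * (C (cM a1 e1 (p-1) k') * Qp a1 k')
        = C (cM a1 e1 (p-1) k') * Qp a (k'+1) := by
      intro k'
      have : Qp a (k'+1) = (X - C (a 0)) * Qp a1 k' := by
        rw [Qp, Qp, Finset.prod_range_succ']
        ring
      rw [this]; ring
    rw [Finset.sum_congr rfl (fun k' _ => hterm k')]
    rw [Finset.sum_range_succ' (fun k' => C (if k' = 0 then 0 else cM a1 e1 (p-1) (k'-1)) * Qp a k') n]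
    simp
  have main : ∑ k' ∈ Finset.range (n+1),
      C ((cM a e p k' - cp * cM a e (p-1) k') - (if k' = 0 then 0 else cM a1 e1 (p-1) (k'-1))) * Qp a k' = 0 := by
    have := hpoly
    rw [lhs_exp, rhs_exp] at this
    rw [← sub_eq_zero] at this
    rw [← this, ← Finset.sum_sub_distrib]
    apply Finset.sum_congr rfl
    intro k' _
    rw [map_sub]
    ring
  have := uniq a (n+1) _ main k (by omega)
  have h0 : cM a e p k - cp * cM a e (p-1) k - (if k = 0 then 0 else cM a1 e1 (p-1) (k-1)) = 0 := this
  linarith [h0]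

lemma fin_val_ne_zero {N : ℕ} {x : Fin (N+1)} (h : x ≠ 0) : (x : ℕ) ≠ 0 :=
  fun hh => h (Fin.ext hh)

/-- Adding a nonneg multiple of the previous row preserves total nonnegativity. -/
lemma TNN_updateRow {N : ℕ} (A : Matrix (Fin N) (Fin N) ℝ) (hA : TNN A)
    (p q : Fin N) (hpq : (q:ℕ) + 1 = (p:ℕ)) (c : ℝ) (hc : 0 ≤ c) :
    TNN (A.updateRow p (A p + c • A q)) := by
  intro r ρ γ hρ hγ
  by_cases hp : ∃ i, ρ i = p
  · obtain ⟨i, hi⟩ := hp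
    have hqp : q ≠ p := by
      intro h
      have := congrArg Fin.val h
      omega
    have hsub : (A.updateRow p (A p + c • A q)).submatrix ρ γ
        = (A.submatrix ρ γ).updateRow i ((A.submatrix ρ γ) i + c • fun l => A q (γ l)) := by
      ext x y
      by_cases hx : x = i
      · subst hx
        simp [Matrix.updateRow_apply, hi, Matrix.submatrix_apply]
      · have hxp : ρ x ≠ p := fun hcon => hx (hρ.injective (hcon.trans hi.symm))
        simp [Matrix.updateRow_apply, hx, hxp, Matrix.submatrix_apply]
    rw [hsub, Matrix.det_updateRow_add, Matrix.updateRow_eq_self, Matrix.det_updateRow_smul]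
    have h1 := hA r ρ γ hρ hγ
    by_cases hq : ∃ i', ρ i' = q
    · obtain ⟨i', hi'⟩ := hq
      have hne : i ≠ i' := by
        intro h
        subst h
        rw [hi] at hi'
        exact hqp hi'.symm
      have hz : ((A.submatrix ρ γ).updateRow i fun l => A q (γ l)).det = 0 := by
        apply Matrix.det_zero_of_row_eq hne
        rw [Matrix.updateRow_self, Matrix.updateRow_ne (Ne.symm hne)]
        funext l
        simp [Matrix.submatrix_apply, hi']
      rw [hz, mul_zero, add_zero]
      exact h1
    · push_neg at hq
      set ρ' : Fin r → Fin N := Function.update ρ i q with hρ'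
      have hsub2 : (A.submatrix ρ γ).updateRow i (fun l => A q (γ l)) = A.submatrix ρ' γ := by
        ext x y
        by_cases hx : x = i
        · subst hx
          simp [Matrix.updateRow_self, hρ', Matrix.submatrix_apply]
        · simp [Matrix.updateRow_ne hx, hρ', Function.update_of_ne hx, Matrix.submatrix_apply]
      have hmono : StrictMono ρ' := by
        intro x y hxy
        rw [Fin.lt_def]
        by_cases hxi : x = i
        · have hyi : y ≠ i := by rw [← hxi]; exact (ne_of_gt hxy)
          have e1 : ρ' x = q := by rw [hρ', hxi, Function.update_self]
          have e2 : ρ' y = ρ y := by rw [hρ', Function.update_of_ne hyi]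
          rw [e1, e2]
          have h3 : ρ x < ρ y := hρ hxy
          rw [hxi, hi] at h3
          rw [Fin.lt_def] at h3
          omega
        · by_cases hyi : y = i
          · have e1 : ρ' y = q := by rw [hρ', hyi, Function.update_self]
            have e2 : ρ' x = ρ x := by rw [hρ', Function.update_of_ne hxi]
            rw [e1, e2]
            have h2 : ρ x < ρ y := hρ hxy
            rw [hyi, hi] at h2
            have h3 : ρ x ≠ q := hq x
            rw [Fin.lt_def] at h2
            have h4 : (ρ x : ℕ) ≠ (q:ℕ) := fun hh => h3 (Fin.ext hh)
            omega
          · have e1 : ρ' x = ρ x := by rw [hρ', Function.update_of_ne hxi]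
            have e2 : ρ' y = ρ y := by rw [hρ', Function.update_of_ne hyi]
            rw [e1, e2, ← Fin.lt_def]
            exact hρ hxy
      rw [hsub2]
      have h2 := hA r ρ' γ hmono hγ
      positivity
  · push_neg at hp
    have hsub : (A.updateRow p (A p + c • A q)).submatrix ρ γ = A.submatrix ρ γ := by
      ext x y
      simp [Matrix.updateRow_ne (hp x), Matrix.submatrix_apply]
    rw [hsub]
    exact hA r ρ γ hρ hγ

/-- Direct sum with the 1×1 identity block preserves TNN. -/
lemma TNN_embed {N : ℕ} (f g : ℕ → ℕ → ℝ)
    (hf : TNN (Matrix.of fun p k : Fin N => f (p:ℕ) (k:ℕ)))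
    (hg00 : g 0 0 = 1) (hg0k : ∀ k, 1 ≤ k → g 0 k = 0) (hgp0 : ∀ p, 1 ≤ p → g p 0 = 0)
    (hgpk : ∀ p k, g (p+1) (k+1) = f p k) :
    TNN (Matrix.of fun p k : Fin (N+1) => g (p:ℕ) (k:ℕ)) := by
  set G : Matrix (Fin (N+1)) (Fin (N+1)) ℝ := Matrix.of fun p k => g (p:ℕ) (k:ℕ) with hG
  have core : ∀ (r : ℕ) (ρ γ : Fin r → Fin (N+1)), StrictMono ρ → StrictMono γ →
      (∀ i, ρ i ≠ 0) → (∀ l, γ l ≠ 0) → 0 ≤ (G.submatrix ρ γ).det := by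
    intro r ρ γ hρ hγ hρ0 hγ0
    have hρlt : ∀ i, (ρ i : ℕ) - 1 < N := by
      intro i
      have h1 := (ρ i).isLt
      have h2 : (ρ i : ℕ) ≠ 0 := fin_val_ne_zero (hρ0 i)
      omega
    have hγlt : ∀ l, (γ l : ℕ) - 1 < N := by
      intro l
      have h1 := (γ l).isLt
      have h2 : (γ l : ℕ) ≠ 0 := fin_val_ne_zero (hγ0 l)
      omega
    set ρ' : Fin r → Fin N := fun i => ⟨(ρ i : ℕ) - 1, hρlt i⟩ with hρ'
    set γ' : Fin r → Fin N := fun l => ⟨(γ l : ℕ) - 1, hγlt l⟩ with hγ'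
    have heq : G.submatrix ρ γ = (Matrix.of fun p k : Fin N => f (p:ℕ) (k:ℕ)).submatrix ρ' γ' := by
      ext i l
      simp only [Matrix.submatrix_apply, hG, Matrix.of_apply, hρ', hγ']
      have h1 : (ρ i : ℕ) = ((ρ i : ℕ) - 1) + 1 := by
        have := fin_val_ne_zero (hρ0 i); omega
      have h2 : (γ l : ℕ) = ((γ l : ℕ) - 1) + 1 := by
        have := fin_val_ne_zero (hγ0 l); omega
      conv_lhs => rw [h1, h2]
      rw [hgpk]
    rw [heq]
    apply hf r ρ' γ'
    · intro x y hxy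
      have := hρ hxy
      rw [Fin.lt_def] at this ⊢
      have hx := fin_val_ne_zero (hρ0 x)
      simp only [hρ']
      omega
    · intro x y hxy
      have := hγ hxy
      rw [Fin.lt_def] at this ⊢
      have hx := fin_val_ne_zero (hγ0 x)
      simp only [hγ']
      omega
  intro r ρ γ hρ hγ
  cases r with
  | zero => simp [Matrix.det_fin_zero]
  | succ r' =>
    have hρpos : ∀ i : Fin (r'+1), i ≠ 0 → ρ 0 < ρ i := by
      intro i hi
      exact hρ (Fin.pos_of_ne_zero hi)
    have hγpos : ∀ l : Fin (r'+1), l ≠ 0 → γ 0 < γ l := by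
      intro l hl
      exact hγ (Fin.pos_of_ne_zero hl)
    by_cases hρ0 : ρ 0 = 0
    · by_cases hγ0 : γ 0 = 0
      · -- Laplace expansion along column 0
        rw [Matrix.det_succ_column_zero, Finset.sum_eq_single 0]
        · have hentry : (G.submatrix ρ γ) 0 0 = 1 := by
            simp only [Matrix.submatrix_apply, hρ0, hγ0, hG, Matrix.of_apply]
            exact hg00
          rw [hentry]
          simp only [Fin.val_zero, pow_zero, one_mul, mul_one]
          rw [Matrix.submatrix_submatrix]
          rw [Fin.succAbove_zero]
          apply core r' (ρ ∘ Fin.succ) (γ ∘ Fin.succ)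
            (hρ.comp Fin.strictMono_succ) (hγ.comp Fin.strictMono_succ)
          · intro i
            have := hρpos (Fin.succ i) (Fin.succ_ne_zero i)
            rw [hρ0] at this
            exact Fin.pos_iff_ne_zero.mp this
          · intro l
            have := hγpos (Fin.succ l) (Fin.succ_ne_zero l)
            rw [hγ0] at this
            exact Fin.pos_iff_ne_zero.mp this
        · intro i _ hi
          have hentry : (G.submatrix ρ γ) i 0 = 0 := by
            simp only [Matrix.submatrix_apply, hγ0, hG, Matrix.of_apply]
            apply hgp0
            have := hρpos i hi
            rw [hρ0] at this
            rw [Fin.lt_def] at this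
            omega
          rw [hentry]
          ring
        · intro h
          exact absurd (Finset.mem_univ 0) h
      · -- row 0 of the submatrix is zero
        have : (G.submatrix ρ γ).det = 0 := by
          apply Matrix.det_eq_zero_of_row_eq_zero 0
          intro l
          simp only [Matrix.submatrix_apply, hρ0, hG, Matrix.of_apply]
          apply hg0k
          have h1 : γ 0 ≤ γ l := hγ.monotone (Fin.zero_le l)
          have h2 : (γ 0 : ℕ) ≠ 0 := fin_val_ne_zero hγ0
          rw [Fin.le_def] at h1
          omega
        rw [this]
    · by_cases hγ0 : γ 0 = 0
      · have : (G.submatrix ρ γ).det = 0 := by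
          apply Matrix.det_eq_zero_of_column_eq_zero 0
          intro i
          simp only [Matrix.submatrix_apply, hγ0, hG, Matrix.of_apply]
          apply hgp0
          have h1 : ρ 0 ≤ ρ i := hρ.monotone (Fin.zero_le i)
          have h2 : (ρ 0 : ℕ) ≠ 0 := fin_val_ne_zero hρ0
          rw [Fin.le_def] at h1
          omega
        rw [this]
      · apply core (r'+1) ρ γ hρ hγ
        · intro i
          have h1 : ρ 0 ≤ ρ i := hρ.monotone (Fin.zero_le i)
          have h2 : (ρ 0 : ℕ) ≠ 0 := fin_val_ne_zero hρ0
          rw [Fin.le_def] at h1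
          intro hh; rw [hh] at h1; simp at h1; omega
        · intro l
          have h1 : γ 0 ≤ γ l := hγ.monotone (Fin.zero_le l)
          have h2 : (γ 0 : ℕ) ≠ 0 := fin_val_ne_zero hγ0
          rw [Fin.le_def] at h1
          intro hh; rw [hh] at h1; simp at h1; omega

/-! ### Algorithm lemmas -/

lemma rgsRun_shift (a : ℕ → ℝ) (Xl : List ℝ) :
    ∀ i, rgsRun a Xl (i+1) = (rgsStep (a 0) Xl).bind fun Y => rgsRun (fun t => a (t+1)) Y i := by
  intro i
  induction i with
  | zero =>
    show (rgsRun a Xl 0).bind (rgsStep (a 0)) = _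
    simp [rgsRun]
  | succ i ih =>
    show (rgsRun a Xl (i+1)).bind (rgsStep (a (i+1))) = _
    rw [ih, Option.bind_assoc]
    rfl

lemma isRG_succ (a e : ℕ → ℝ) (N : ℕ) :
    IsRGGen (N+1) a e ↔ ∃ Y, rgsStep (a 0) (List.ofFn fun i : Fin (N+1) => e i) = some Y
       ∧ (rgsRun (fun t => a (t+1)) Y N).isSome := by
  rw [IsRGGen, rgsRun_shift]
  cases h : rgsStep (a 0) (List.ofFn fun i : Fin (N+1) => e i) with
  | none => simp
  | some Y => simp

lemma ofFn_dropLast (n : ℕ) (e : ℕ → ℝ) :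
    (List.ofFn fun i : Fin (n+1) => e i).dropLast = List.ofFn fun i : Fin n => e i := by
  apply List.ext_getElem
  · simp
  · intro i h1 h2
    rw [List.getElem_dropLast]
    rw [List.getElem_ofFn, List.getElem_ofFn]

lemma ofFn_eraseIdx (n j : ℕ) (hj : j < n + 1) (e : ℕ → ℝ) :
    (List.ofFn fun i : Fin (n+1) => e i).eraseIdx j
      = List.ofFn fun i : Fin n => (if (i:ℕ) < j then e i else e (i+1)) := by
  apply List.ext_getElem
  · rw [List.length_eraseIdx]
    simp
    omega
  · intro i h1 h2
    rw [List.getElem_eraseIdx]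
    split
    · rw [List.getElem_ofFn, List.getElem_ofFn]
      simp only []
      rw [if_pos (by assumption)]
    · rw [List.getElem_ofFn, List.getElem_ofFn]
      simp only []
      rw [if_neg (by omega)]

lemma step_none (n : ℕ) (a e : ℕ → ℝ) (hall : ∀ i, i < n → e i < a 0) :
    rgsStep (a 0) (List.ofFn fun i : Fin n => e i)
      = some ((List.ofFn fun i : Fin n => e i).dropLast) := by
  have hfind : (List.ofFn fun i : Fin n => e i).findIdx? (fun x => decide (a 0 ≤ x)) = none := by
    rw [List.findIdx?_eq_none_iff]
    intro x hx
    rw [List.mem_ofFn] at hx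
    obtain ⟨i, rfl⟩ := hx
    simp only [decide_eq_false_iff_not, not_le]
    exact hall i i.isLt
  unfold rgsStep
  rw [hfind]

lemma step_found (n j : ℕ) (a e : ℕ → ℝ) (hj : j < n) (hge : a 0 ≤ e j)
    (hmin : ∀ i, i < j → e i < a 0) :
    rgsStep (a 0) (List.ofFn fun i : Fin n => e i)
      = if e j = a 0 then some ((List.ofFn fun i : Fin n => e i).eraseIdx j) else none := by
  have hlen : j < (List.ofFn fun i : Fin n => e i).length := by simp [hj]
  have hfind : (List.ofFn fun i : Fin n => e i).findIdx? (fun x => decide (a 0 ≤ x)) = some j := by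
    rw [List.findIdx?_eq_some_iff_getElem]
    refine ⟨hlen, ?_, ?_⟩
    · rw [List.getElem_ofFn]
      simpa using hge
    · intro i hij
      rw [List.getElem_ofFn]
      simp only [decide_eq_true_eq]
      simp only [Bool.not_eq_true, decide_eq_false_iff_not, not_le]
      exact hmin i hij
  have hgetD : (List.ofFn fun i : Fin n => e i).getD j 0 = e j := by
    rw [List.getD_eq_getElem _ _ hlen, List.getElem_ofFn]
  unfold rgsStep
  rw [hfind]
  simp only [hgetD]

lemma IsRGGen_drop (a e : ℕ → ℝ) (N : ℕ) (hall : ∀ i, i < N+1 → e i < a 0) :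
    IsRGGen (N+1) a e ↔ IsRGGen N (fun t => a (t+1)) e := by
  rw [isRG_succ, IsRGGen]
  constructor
  · rintro ⟨Y, hY, hrun⟩
    rw [step_none (N+1) a e hall, ofFn_dropLast] at hY
    obtain rfl : (List.ofFn fun i : Fin N => e i) = Y := Option.some.inj hY
    exact hrun
  · intro h
    exact ⟨_, by rw [step_none (N+1) a e hall, ofFn_dropLast], h⟩

lemma IsRGGen_match (a e : ℕ → ℝ) (N j : ℕ) (hj : j < N+1) (heq : e j = a 0)
    (hmin : ∀ i, i < j → e i < a 0) :
    IsRGGen (N+1) a e ↔ IsRGGen N (fun t => a (t+1)) (fun i => if i < j then e i else e (i+1)) := by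
  rw [isRG_succ, IsRGGen]
  have hstep : rgsStep (a 0) (List.ofFn fun i : Fin (N+1) => e i)
      = some (List.ofFn fun i : Fin N => (if (i:ℕ) < j then e i else e (i+1))) := by
    rw [step_found (N+1) j a e hj (le_of_eq heq.symm) hmin, if_pos heq, ofFn_eraseIdx N j hj e]
  constructor
  · rintro ⟨Y, hY, hrun⟩
    rw [hstep] at hY
    obtain rfl := Option.some.inj hY
    exact hrun
  · intro h
    exact ⟨_, hstep, h⟩

lemma IsRGGen_fail (a e : ℕ → ℝ) (N j : ℕ) (hj : j < N+1) (hgt : a 0 < e j)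
    (hmin : ∀ i, i < j → e i < a 0) :
    ¬ IsRGGen (N+1) a e := by
  rw [isRG_succ]
  rintro ⟨Y, hY, _⟩
  rw [step_found (N+1) j a e hj (le_of_lt hgt) hmin, if_neg (by linarith)] at hY
  exact nomatch hY

lemma scenario (a e : ℕ → ℝ) (n : ℕ) :
    (∀ i, i < n → e i < a 0) ∨ ∃ j, j < n ∧ a 0 ≤ e j ∧ (∀ i, i < j → e i < a 0) := by
  classical
  by_cases h : ∃ i, i < n ∧ a 0 ≤ e i
  · right
    refine ⟨Nat.find h, (Nat.find_spec h).1, (Nat.find_spec h).2, ?_⟩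
    intro i hi
    have := Nat.find_min h hi
    push_neg at this
    by_cases hin : i < n
    · exact this hin
    · exact absurd ((Nat.find_spec h).1) (by omega)
  · left
    push_neg at h
    intro i hi
    exact h i hi

/-! ### Main development -/

noncomputable def bigM (n : ℕ) (a e : ℕ → ℝ) : Matrix (Fin (n+1)) (Fin (n+1)) ℝ :=
  Matrix.of fun m k => cM a e (m:ℕ) (k:ℕ)

def NegCert (n : ℕ) (a e : ℕ → ℝ) : Prop :=
  ∃ (k m : ℕ) (γ : Fin (k+1) → ℕ), 1 ≤ m ∧ m + k ≤ n ∧ (∀ l, γ l ≤ n) ∧ StrictMono γ ∧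
    (Matrix.of fun i l : Fin (k+1) => cM a e (m + (i:ℕ)) (γ l)).det < 0

lemma NegCert_not_TNN (n : ℕ) (a e : ℕ → ℝ) (h : NegCert n a e) : ¬ TNN (bigM n a e) := by
  obtain ⟨k, m, γ, hm, hmk, hγn, hγmono, hdet⟩ := h
  intro hT
  have hρlt : ∀ i : Fin (k+1), m + (i:ℕ) < n+1 := fun i => by have := i.isLt; omega
  have hγlt : ∀ l : Fin (k+1), γ l < n+1 := fun l => by have := hγn l; omega
  have h1 := hT (k+1) (fun i => ⟨m + (i:ℕ), hρlt i⟩) (fun l => ⟨γ l, hγlt l⟩)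
    (fun x y hxy => by rw [Fin.lt_def]; have := hxy; simp; omega)
    (fun x y hxy => by rw [Fin.lt_def]; have := hγmono hxy; simpa using this)
  have heq : (bigM n a e).submatrix (fun i : Fin (k+1) => (⟨m + (i:ℕ), hρlt i⟩ : Fin (n+1)))
      (fun l => ⟨γ l, hγlt l⟩) = Matrix.of fun i l : Fin (k+1) => cM a e (m + (i:ℕ)) (γ l) := by
    ext i l
    simp [bigM, Matrix.submatrix_apply]
  rw [heq] at h1
  linarith

section Scenario

variable (a e e1 : ℕ → ℝ) (N j : ℕ)
  (h_agree : ∀ i, i < j → e1 i = e i)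
  (h_less : ∀ i, i < j → e i < a 0)
  (h_tail : ∀ p, j < p → p ≤ N+1 →
      (∏ i ∈ Finset.range p, (X - C (e i))) =
        (X - C (a 0)) * ∏ i ∈ Finset.range (p-1), (X - C (e1 i)))

/-- `Wf p k` : the reduced-matrix row entries, shifted. -/
noncomputable def Wf : ℕ → ℕ → ℝ := fun p k =>
  if k = 0 then 0 else cM (fun t => a (t+1)) e1 (p-1) (k-1)

noncomputable def cmul : ℕ → ℝ := fun p => if p ≤ j then a 0 - e (p-1) else 0

include h_agree h_tail in
lemma keyR : ∀ p k, 1 ≤ p → p ≤ N+1 → k ≤ N+1 →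
    cM a e p k = Wf a e1 p k + cmul a e j p * cM a e (p-1) k := by
  intro p k hp hpn hkn
  have := key_relation a e e1 (N+1) j h_agree h_tail p k hp hpn hkn
  rw [this]
  rfl

include h_less in
lemma cmul_nonneg : ∀ p, 1 ≤ p → 0 ≤ cmul a e j p := by
  intro p hp
  rw [cmul]
  split
  · rename_i hpj
    have := h_less (p-1) (by omega)
    linarith
  · exact le_refl _

include h_less in
lemma pim_pos (m : ℕ) (hm : m < j) : 0 < cM a e m 0 := by
  rw [cM_col0]
  apply Finset.prod_pos
  intro s hs
  simp only [Finset.mem_range] at hs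
  have := h_less s (by omega)
  linarith

include h_agree h_less h_tail in
lemma chain_TNN (hsmall : TNN (bigM N (fun t => a (t+1)) e1)) : TNN (bigM (N+1) a e) := by
  have key := keyR a e e1 N j h_agree h_tail
  -- the V matrix
  set Vf : ℕ → ℕ → ℝ := fun p k =>
    if p = 0 then (if k = 0 then 1 else 0) else Wf a e1 p k with hVf
  have hV : TNN (Matrix.of fun p k : Fin (N+2) => Vf (p:ℕ) (k:ℕ)) := by
    apply TNN_embed (fun p k => cM (fun t => a (t+1)) e1 p k) Vf hsmall
    · simp [hVf]
    · intro k hk; simp [hVf]; omega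
    · intro p hp; simp [hVf, Wf]; omega
    · intro p k; simp [hVf, Wf]
  -- the chain
  have hchain : ∀ t, t ≤ N+1 →
      TNN (Matrix.of fun p k : Fin (N+2) =>
        if (p:ℕ) ≤ t then cM a e (p:ℕ) (k:ℕ) else Vf (p:ℕ) (k:ℕ)) := by
    intro t
    induction t with
    | zero =>
      intro _
      have heq : (Matrix.of fun p k : Fin (N+2) =>
          if (p:ℕ) ≤ 0 then cM a e (p:ℕ) (k:ℕ) else Vf (p:ℕ) (k:ℕ))
          = Matrix.of fun p k : Fin (N+2) => Vf (p:ℕ) (k:ℕ) := by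
        ext p k
        simp only [Matrix.of_apply]
        by_cases hp : (p:ℕ) = 0
        · rw [if_pos (by omega), hp, hVf]
          simp [cM]
        · rw [if_neg (by omega)]
      rw [heq]
      exact hV
    | succ t iht =>
      intro ht
      have hT := iht (by omega)
      have ht1 : (t:ℕ)+1 < N+2 := by omega
      have ht0 : (t:ℕ) < N+2 := by omega
      set A : Matrix (Fin (N+2)) (Fin (N+2)) ℝ := Matrix.of fun p k : Fin (N+2) =>
        if (p:ℕ) ≤ t then cM a e (p:ℕ) (k:ℕ) else Vf (p:ℕ) (k:ℕ) with hA
      have hup := TNN_updateRow A hT ⟨t+1, ht1⟩ ⟨t, ht0⟩ (by simp) (cmul a e j (t+1))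
        (cmul_nonneg a e j h_less (t+1) (by omega))
      have heq : (Matrix.of fun p k : Fin (N+2) =>
          if (p:ℕ) ≤ t+1 then cM a e (p:ℕ) (k:ℕ) else Vf (p:ℕ) (k:ℕ))
          = A.updateRow ⟨t+1, ht1⟩ (A ⟨t+1, ht1⟩ + cmul a e j (t+1) • A ⟨t, ht0⟩) := by
        ext p k
        by_cases hp : p = (⟨t+1, ht1⟩ : Fin (N+2))
        · subst hp
          rw [Matrix.updateRow_self]
          simp only [Matrix.of_apply, Pi.add_apply, Pi.smul_apply, smul_eq_mul, hA]
          rw [if_pos (by simp), if_neg (by simp), if_pos (by simp)]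
          have hkey := key (t+1) (k:ℕ) (by omega) (by omega) (by have := k.isLt; omega)
          have hV1 : Vf (t+1) (k:ℕ) = Wf a e1 (t+1) (k:ℕ) := by
            rw [hVf]; simp
          rw [hV1]
          have harith : t + 1 - 1 = t := by omega
          rw [harith] at hkey
          exact hkey
        · rw [Matrix.updateRow_ne hp]
          simp only [Matrix.of_apply, hA]
          have hpne : (p:ℕ) ≠ t+1 := fun hh => hp (Fin.ext hh)
          by_cases hple : (p:ℕ) ≤ t
          · rw [if_pos (by omega), if_pos hple]
          · rw [if_neg (by omega), if_neg hple]
      rw [heq]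
      exact hup
  have hfin := hchain (N+1) (le_refl _)
  have heq : (Matrix.of fun p k : Fin (N+2) =>
      if (p:ℕ) ≤ N+1 then cM a e (p:ℕ) (k:ℕ) else Vf (p:ℕ) (k:ℕ)) = bigM (N+1) a e := by
    ext p k
    simp only [Matrix.of_apply, bigM]
    rw [if_pos (by have := p.isLt; omega)]
  rwa [heq] at hfin

include h_agree h_less h_tail in
lemma lift_cert (hc : NegCert N (fun t => a (t+1)) e1) : NegCert (N+1) a e := by
  obtain ⟨k, m, γ, hm, hmk, hγn, hγmono, hdet⟩ := hc
  have key := keyR a e e1 N j h_agree h_tail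
  by_cases hcase : m < j
  · -- Case B : pivot lift
    have hγ'lt : ∀ l : Fin (k+2), (l:ℕ) - 1 < k + 1 := fun l => by have := l.isLt; omega
    set γ' : Fin (k+2) → ℕ := fun l => if (l:ℕ) = 0 then 0 else γ ⟨(l:ℕ)-1, hγ'lt l⟩ + 1 with hγ'
    have hγ'n : ∀ l, γ' l ≤ N+1 := by
      intro l
      simp only [hγ']
      split
      · omega
      · have := hγn ⟨(l:ℕ)-1, hγ'lt l⟩; omega
    have hγ'mono : StrictMono γ' := by
      intro x y hxy
      simp only [hγ']
      have hxy' : (x:ℕ) < (y:ℕ) := hxy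
      by_cases hx0 : (x:ℕ) = 0
      · rw [if_pos hx0, if_neg (by omega)]
        omega
      · rw [if_neg hx0, if_neg (by omega)]
        have := hγmono (show (⟨(x:ℕ)-1, hγ'lt x⟩ : Fin (k+1)) < ⟨(y:ℕ)-1, hγ'lt y⟩ by
          rw [Fin.lt_def]; simp; omega)
        omega
    refine ⟨k+1, m, γ', hm, by omega, hγ'n, hγ'mono, ?_⟩
    -- determinant computation
    set B' : Matrix (Fin (k+2)) (Fin (k+2)) ℝ := Matrix.of fun i l : Fin (k+2) =>
      if (i:ℕ) = 0 then cM a e m (γ' l) else Wf a e1 (m + (i:ℕ)) (γ' l) with hB'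
    -- step 1 : det B = det B'
    have hstep1 : ∀ t, t ≤ k+1 →
        (Matrix.of fun i l : Fin (k+2) =>
          if (i:ℕ) ≤ t then cM a e (m + (i:ℕ)) (γ' l) else B' i l).det = B'.det := by
      intro t
      induction t with
      | zero =>
        intro _
        congr 1
        ext i l
        simp only [Matrix.of_apply]
        by_cases hi : (i:ℕ) = 0
        · rw [if_pos (by omega), hB']
          simp only [Matrix.of_apply]
          rw [if_pos hi, hi, add_zero]
        · rw [if_neg (by omega)]
      | succ t iht =>
        intro ht
        have ht1 : (t:ℕ)+1 < k+2 := by omega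
        have ht0 : (t:ℕ) < k+2 := by omega
        set D : Matrix (Fin (k+2)) (Fin (k+2)) ℝ := Matrix.of fun i l : Fin (k+2) =>
          if (i:ℕ) ≤ t then cM a e (m + (i:ℕ)) (γ' l) else B' i l with hD
        have hrow : (Matrix.of fun i l : Fin (k+2) =>
            if (i:ℕ) ≤ t+1 then cM a e (m + (i:ℕ)) (γ' l) else B' i l)
            = D.updateRow ⟨t+1, ht1⟩ (D ⟨t+1, ht1⟩ + cmul a e j (m+t+1) • D ⟨t, ht0⟩) := by
          ext i l
          by_cases hi : i = (⟨t+1, ht1⟩ : Fin (k+2))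
          · subst hi
            rw [Matrix.updateRow_self]
            simp only [Matrix.of_apply, Pi.add_apply, Pi.smul_apply, smul_eq_mul, hD, hB']
            rw [if_pos (by simp), if_neg (by simp), if_neg (by simp), if_pos (by simp)]
            have hkey := key (m+t+1) (γ' l) (by omega) (by omega) (hγ'n l)
            have h1 : m + t + 1 - 1 = m + t := by omega
            rw [h1] at hkey
            have h2 : m + ((t:ℕ)+1) = m + t + 1 := by omega
            rw [h2]
            rw [hkey]
          · rw [Matrix.updateRow_ne hi]
            simp only [Matrix.of_apply, hD]
            have hine : (i:ℕ) ≠ t+1 := fun hh => hi (Fin.ext hh)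
            by_cases hile : (i:ℕ) ≤ t
            · rw [if_pos (by omega), if_pos hile]
            · rw [if_neg (by omega), if_neg hile]
        rw [hrow, Matrix.det_updateRow_add_smul_self D (by
          intro hh
          have := congrArg Fin.val hh
          simp at this) (cmul a e j (m+t+1))]
        exact iht (by omega)
    have hB : (Matrix.of fun i l : Fin (k+2) => cM a e (m + (i:ℕ)) (γ' l)).det = B'.det := by
      have := hstep1 (k+1) (le_refl _)
      rw [← this]
      congr 1
      ext i l
      simp only [Matrix.of_apply]
      rw [if_pos (by have := i.isLt; omega)]
    -- step 2 : Laplace along column 0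
    have hstep2 : B'.det = cM a e m 0 *
        (Matrix.of fun i l : Fin (k+1) => cM (fun t => a (t+1)) e1 (m + (i:ℕ)) (γ l)).det := by
      rw [Matrix.det_succ_column_zero, Finset.sum_eq_single 0]
      · simp only [Fin.val_zero, pow_zero, one_mul]
        have he : B' 0 0 = cM a e m 0 := by
          simp only [hB', Matrix.of_apply, hγ']
          norm_num
        rw [he]
        have hsub : B'.submatrix (Fin.succAbove (0 : Fin (k+2))) Fin.succ
            = Matrix.of fun i l : Fin (k+1) => cM (fun t => a (t+1)) e1 (m + (i:ℕ)) (γ l) := by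
          rw [Fin.succAbove_zero]
          ext i l
          simp only [Matrix.submatrix_apply, hB', Matrix.of_apply]
          have hne : γ' (Fin.succ l) = γ l + 1 := by
            simp only [hγ']
            rw [if_neg (by simp)]
            congr 2
          rw [if_neg (by simp), hne]
          simp only [Wf, Fin.val_succ]
          rw [if_neg (by omega)]
          have h2 : γ l + 1 - 1 = γ l := by omega
          have h3 : m + ((i:ℕ)+1) - 1 = m + (i:ℕ) := by omega
          rw [h3, h2]
        rw [hsub]
      · intro i _ hi
        have he : B' i 0 = 0 := by
          simp only [hB', Matrix.of_apply]
          rw [if_neg (by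
            intro hh
            exact hi (Fin.ext hh))]
          simp only [Wf]
          rw [if_pos (by simp only [hγ']; norm_num)]
        rw [he]
        ring
      · intro h
        exact absurd (Finset.mem_univ 0) h
    rw [hB, hstep2]
    apply mul_neg_of_pos_of_neg
    · exact pim_pos a e j h_less m hcase
    · exact hdet
  · -- Case A : plain shift
    refine ⟨k, m+1, fun l => γ l + 1, by omega, by omega,
      fun l => by simp only []; have := hγn l; omega,
      fun x y hxy => by simp only []; have := hγmono hxy; omega, ?_⟩
    have heq : (Matrix.of fun i l : Fin (k+1) => cM a e (m+1+(i:ℕ)) (γ l + 1))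
        = Matrix.of fun i l : Fin (k+1) => cM (fun t => a (t+1)) e1 (m + (i:ℕ)) (γ l) := by
      ext i l
      simp only [Matrix.of_apply]
      have hkey := key (m+1+(i:ℕ)) (γ l + 1) (by omega) (by have := i.isLt; omega)
        (by have := hγn l; omega)
      rw [hkey]
      simp only [Wf, cmul]
      rw [if_neg (by omega), if_neg (by omega)]
      have h1 : m+1+(i:ℕ)-1 = m + (i:ℕ) := by omega
      have h2 : γ l + 1 - 1 = γ l := by omega
      rw [h1, h2]
      ring
    rw [heq]
    exact hdet

end Scenario

lemma tail_identity (a e : ℕ → ℝ) (j : ℕ) (heq : e j = a 0) :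
    ∀ p, j < p →
      (∏ i ∈ Finset.range p, (X - C (e i))) =
        (X - C (a 0)) * ∏ i ∈ Finset.range (p-1), (X - C (if i < j then e i else e (i+1))) := by
  intro p hjp
  obtain ⟨q, rfl⟩ : ∃ q, p = j + 1 + q := ⟨p - j - 1, by omega⟩
  have h1 : j + 1 + q - 1 = j + q := by omega
  rw [h1]
  rw [Finset.prod_range_add (fun i => (X - C (e i))) (j+1) q]
  rw [Finset.prod_range_succ (fun i => (X - C (e i))) j]
  rw [Finset.prod_range_add (fun i => (X - C (if i < j then e i else e (i+1)))) j q]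
  have h2 : (∏ i ∈ Finset.range j, (X - C (if i < j then e i else e (i+1))))
      = ∏ i ∈ Finset.range j, (X - C (e i)) := by
    apply Finset.prod_congr rfl
    intro i hi
    simp only [Finset.mem_range] at hi
    rw [if_pos hi]
  have h3 : (∏ i ∈ Finset.range q, (X - C (if j + i < j then e (j+i) else e (j+i+1))))
      = ∏ i ∈ Finset.range q, (X - C (e (j + 1 + i))) := by
    apply Finset.prod_congr rfl
    intro i _
    rw [if_neg (by omega)]
    have : j + i + 1 = j + 1 + i := by omega
    rw [this]
  rw [h2, h3, heq]
  ring

lemma SUF : ∀ (n : ℕ) (a e : ℕ → ℝ), IsRGGen n a e → TNN (bigM n a e) := by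
  intro n
  induction n with
  | zero =>
    intro a e _
    intro r ρ γ hρ hγ
    match r with
    | 0 => simp [Matrix.det_fin_zero]
    | 1 =>
      rw [Matrix.det_fin_one]
      have h0 : ρ 0 = 0 := Fin.ext (by have := (ρ 0).isLt; omega)
      have h1 : γ 0 = 0 := Fin.ext (by have := (γ 0).isLt; omega)
      simp [Matrix.submatrix_apply, h0, h1, bigM, cM]
    | (r'+2) =>
      exfalso
      have h2 := hρ (show (0 : Fin (r'+2)) < 1 by rw [Fin.lt_def]; simp)
      have ha := (ρ 0).isLt
      have hb := (ρ 1).isLt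
      rw [Fin.lt_def] at h2
      omega
  | succ N ih =>
    intro a e hRG
    rcases scenario a e (N+1) with hall | ⟨j, hj, hge, hmin⟩
    · -- drop scenario : j := N+1, e1 := e
      have hsmall : TNN (bigM N (fun t => a (t+1)) e) :=
        ih _ _ ((IsRGGen_drop a e N hall).mp hRG)
      exact chain_TNN a e e N (N+1)
        (fun i _ => rfl) (fun i hi => hall i hi) (fun p hp hpn => absurd hpn (by omega)) hsmall
    · rcases eq_or_lt_of_le hge with heq | hgt
      · -- match scenario
        have hsmall : TNN (bigM N (fun t => a (t+1)) (fun i => if i < j then e i else e (i+1))) :=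
          ih _ _ ((IsRGGen_match a e N j hj heq.symm hmin).mp hRG)
        exact chain_TNN a e (fun i => if i < j then e i else e (i+1)) N j
          (fun i hi => if_pos hi) hmin
          (fun p hp _ => tail_identity a e j heq.symm p hp) hsmall
      · exact absurd hRG (IsRGGen_fail a e N j hj hgt hmin)

lemma NEG : ∀ (n : ℕ) (a e : ℕ → ℝ), ¬ IsRGGen n a e → NegCert n a e := by
  intro n
  induction n with
  | zero =>
    intro a e h
    exact absurd (by simp [IsRGGen, rgsRun]) h
  | succ N ih =>
    intro a e hnot
    rcases scenario a e (N+1) with hall | ⟨j, hj, hge, hmin⟩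
    · have hsub : ¬ IsRGGen N (fun t => a (t+1)) e :=
        fun h => hnot ((IsRGGen_drop a e N hall).mpr h)
      exact lift_cert a e e N (N+1)
        (fun i _ => rfl) (fun i hi => hall i hi) (fun p hp hpn => absurd hpn (by omega))
        (ih _ _ hsub)
    · rcases eq_or_lt_of_le hge with heq | hgt
      · have hsub : ¬ IsRGGen N (fun t => a (t+1)) (fun i => if i < j then e i else e (i+1)) :=
          fun h => hnot ((IsRGGen_match a e N j hj heq.symm hmin).mpr h)
        exact lift_cert a e (fun i => if i < j then e i else e (i+1)) N j
          (fun i hi => if_pos hi) hmin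
          (fun p hp _ => tail_identity a e j heq.symm p hp)
          (ih _ _ hsub)
      · -- direct failure certificate
        refine ⟨0, j+1, fun _ => 0, by omega, by omega, fun _ => Nat.zero_le _, ?_, ?_⟩
        · intro x y hxy
          have hx := x.isLt
          have hy := y.isLt
          rw [Fin.lt_def] at hxy
          omega
        · rw [Matrix.det_fin_one]
          simp only [Matrix.of_apply, Fin.val_zero, add_zero]
          rw [cM_col0, Finset.prod_range_succ]
          apply mul_neg_of_pos_of_neg
          · apply Finset.prod_pos
            intro s hs
            simp only [Finset.mem_range] at hs
            have := hmin s hs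
            linarith
          · linarith

theorem main_iff (n : ℕ) (a e : ℕ → ℝ) : TNN (bigM n a e) ↔ IsRGGen n a e := by
  constructor
  · intro hT
    by_contra h
    exact NegCert_not_TNN n a e (NEG n a e h) hT
  · exact SUF n a e

theorem statement0 (n : ℕ) (a e : ℕ → ℝ)
    (M : Matrix (Fin (n+1)) (Fin (n+1)) ℝ) (hM : IsCOB n a e M) :
    TNN M ↔ IsRGGen n a e := by
  have hM' : ∀ (m k : Fin (n+1)), M m k = cM a e (m:ℕ) (k:ℕ) := by
    intro m k
    classical
    set c : ℕ → ℝ := fun k' => if h : k' < n+1 then M m ⟨k', h⟩ - cM a e (m:ℕ) k' else 0 with hc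
    have hsum : ∑ k' ∈ Finset.range (n+1), C (c k') * Qp a k' = 0 := by
      rw [← Fin.sum_univ_eq_sum_range (fun k' => C (c k') * Qp a k') (n+1)]
      have hterm : ∀ k' : Fin (n+1), C (c (k':ℕ)) * Qp a (k':ℕ)
          = C (M m k') * Qp a (k':ℕ) - C (cM a e (m:ℕ) (k':ℕ)) * Qp a (k':ℕ) := by
        intro k'
        rw [hc]
        simp only [k'.isLt, dif_pos, Fin.eta]
        rw [map_sub]
        ring
      rw [Finset.sum_congr rfl (fun k' _ => hterm k'), Finset.sum_sub_distrib]
      have h1 : ∑ k' : Fin (n+1), C (M m k') * Qp a (k':ℕ)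
          = ∏ i ∈ Finset.range (m:ℕ), (X - C (e i)) := by
        rw [hM m]
        apply Finset.sum_congr rfl
        intro k' _
        rw [Qp]
      have h2 : ∑ k' : Fin (n+1), C (cM a e (m:ℕ) (k':ℕ)) * Qp a (k':ℕ)
          = ∏ i ∈ Finset.range (m:ℕ), (X - C (e i)) := by
        rw [Fin.sum_univ_eq_sum_range (fun k' => C (cM a e (m:ℕ) k') * Qp a k') (n+1)]
        rw [← cM_expand_upto a e (m:ℕ) n (by have := m.isLt; omega)]
      rw [h1, h2, sub_self]
    have hz := uniq a (n+1) c hsum (k:ℕ) k.isLt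
    rw [hc] at hz
    simp only [k.isLt, dif_pos, Fin.eta] at hz
    linarith
  have hMeq : M = bigM n a e := by
    ext m k
    rw [hM' m k]
    rfl
  rw [hMeq]
  exact main_iff n a e
end

section
/- Let a=(a_1,...,a_n) and e=(e_1,...,e_n) be real sequences, and write M(m,k) for the (m,k) entry of M_{e→a}. Then for all 0 ≤ k ≤ m ≤ n, M(m,k) = Σ ∏_{i=1}^{m-k} (a_{s_i - i + 1} - e_{s_i}), where the sum is over all subsets S = {s_1 < s_2 < ... < s_{m-k}} of {1,...,m} of size m-k. -/
open Polynomial Finset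

namespace Statement6Aux

variable (a e : ℕ → ℝ)

/-- The product associated to a subset `S`. -/
noncomputable def P (S : Finset ℕ) : ℝ :=
  ∏ x ∈ S, (a (x - (S.filter (· ≤ x)).card) - e (x - 1))

/-- Sum of `P` over subsets of `{1,…,m}` of cardinality `d`. -/
noncomputable def Hf (d m : ℕ) : ℝ :=
  ∑ S ∈ (Finset.Icc 1 m).powersetCard d, P a e S

lemma Hf_zero (m : ℕ) : Hf a e 0 m = 1 := by
  simp [Hf, P]

lemma Hf_eq_zero {d m : ℕ} (h : m < d) : Hf a e d m = 0 := by
  rw [Hf, Finset.powersetCard_eq_empty.2 (by simpa using h), Finset.sum_empty]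

lemma P_insert {S : Finset ℕ} {d m : ℕ} (hS : S ⊆ Finset.Icc 1 m) (hc : S.card = d) :
    P a e (insert (m+1) S) = (a (m - d) - e m) * P a e S := by
  have hnm : (m+1) ∉ S := fun h => by
    have := (Finset.mem_Icc.mp (hS h)).2; omega
  have hle : ∀ x ∈ S, x ≤ m := fun x hx => (Finset.mem_Icc.mp (hS hx)).2
  rw [P, Finset.prod_insert hnm]
  have h1 : (insert (m+1) S).filter (· ≤ m+1) = insert (m+1) S := by
    apply Finset.filter_true_of_mem
    intro x hx
    rcases Finset.mem_insert.mp hx with h | h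
    · omega
    · have := hle x h; omega
  have h2 : ((insert (m+1) S).filter (· ≤ m+1)).card = d + 1 := by
    rw [h1, Finset.card_insert_of_notMem hnm, hc]
  have h3 : ∀ x ∈ S, ((insert (m+1) S).filter (· ≤ x)).card = (S.filter (· ≤ x)).card := by
    intro x hx
    congr 1
    rw [Finset.filter_insert, if_neg (by have := hle x hx; omega)]
  have h4 : (∏ x ∈ S, (a (x - ((insert (m+1) S).filter (· ≤ x)).card) - e (x - 1)))
      = P a e S := by
    rw [P]
    exact Finset.prod_congr rfl fun x hx => by rw [h3 x hx]
  rw [h4, h2]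
  rw [Nat.succ_sub_succ, Nat.add_sub_cancel]

lemma Hf_succ (d m : ℕ) :
    Hf a e (d+1) (m+1) = Hf a e (d+1) m + (a (m - d) - e m) * Hf a e d m := by
  have hIcc : Finset.Icc 1 (m+1) = insert (m+1) (Finset.Icc 1 m) := by
    ext x; simp [Finset.mem_Icc]; omega
  have hnm : (m+1) ∉ Finset.Icc 1 m := by simp
  have hinj : ∀ S ∈ (Finset.Icc 1 m).powersetCard d, ∀ T ∈ (Finset.Icc 1 m).powersetCard d,
      insert (m+1) S = insert (m+1) T → S = T := by
    intro S hS T hT h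
    obtain ⟨hsub, _⟩ := Finset.mem_powersetCard.mp hS
    obtain ⟨tsub, _⟩ := Finset.mem_powersetCard.mp hT
    have hS' : (m+1) ∉ S := fun hx => by have := (Finset.mem_Icc.mp (hsub hx)).2; omega
    have hT' : (m+1) ∉ T := fun hx => by have := (Finset.mem_Icc.mp (tsub hx)).2; omega
    have : (insert (m+1) S).erase (m+1) = (insert (m+1) T).erase (m+1) := by rw [h]
    rwa [Finset.erase_insert hS', Finset.erase_insert hT'] at this
  rw [Hf, hIcc, Finset.powersetCard_succ_insert hnm]
  rw [Finset.sum_union]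
  · congr 1
    rw [Finset.sum_image hinj, Hf, Finset.mul_sum]
    apply Finset.sum_congr rfl
    intro S hS
    obtain ⟨hsub, hcard⟩ := Finset.mem_powersetCard.mp hS
    exact P_insert a e hsub hcard
  · rw [Finset.disjoint_left]
    intro S hS hS'
    obtain ⟨hsub, _⟩ := Finset.mem_powersetCard.mp hS
    obtain ⟨T, hT, rfl⟩ := Finset.mem_image.mp hS'
    have : (m+1) ∈ insert (m+1) T := Finset.mem_insert_self _ _
    have := (Finset.mem_Icc.mp (hsub this)).2
    omega

/-- The change-of-basis coefficients, defined by the natural recurrence. -/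
noncomputable def cob : ℕ → ℕ → ℝ
  | 0, 0 => 1
  | 0, _+1 => 0
  | m+1, 0 => (a 0 - e m) * cob m 0
  | m+1, k+1 => cob m k + (a (k+1) - e m) * cob m (k+1)

lemma cob_eq_zero : ∀ m k : ℕ, m < k → cob a e m k = 0 := by
  intro m
  induction m with
  | zero => intro k hk; match k, hk with | k+1, _ => rfl
  | succ m ih =>
    intro k hk
    match k, hk with
    | k+1, hk =>
      rw [cob, ih k (by omega), ih (k+1) (by omega)]
      ring

lemma cob_eq_Hf : ∀ m k : ℕ, k ≤ m → cob a e m k = Hf a e (m - k) m := by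
  intro m
  induction m with
  | zero =>
    intro k hk
    interval_cases k
    rw [cob, Hf_zero]
  | succ m ih =>
    intro k hk
    match k with
    | 0 =>
      rw [cob, ih 0 (by omega)]
      simp only [Nat.sub_zero]
      rw [Hf_succ a e m m, Nat.sub_self, Hf_eq_zero a e (Nat.lt_succ_self m)]
      ring
    | k+1 =>
      rcases Nat.lt_or_ge k m with hkm | hkm
      · rw [cob, ih k (by omega), ih (k+1) (by omega)]
        have h1 : m + 1 - (k+1) = (m - (k+1)) + 1 := by omega
        rw [h1, Hf_succ]
        have h2 : m - (m - (k+1)) = k + 1 := by omega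
        have h3 : m - k = (m - (k+1)) + 1 := by omega
        rw [h2, h3]
      · -- k = m
        have hk' : k = m := by omega
        subst hk'
        rw [cob, ih k (le_refl k), cob_eq_zero a e k (k+1) (by omega)]
        have h1 : k - k = 0 := by omega
        have h2 : k + 1 - (k+1) = 0 := by omega
        rw [h1, h2, Hf_zero, Hf_zero]
        ring

lemma natDegree_basis (k : ℕ) : (∏ i ∈ Finset.range k, (X - C (a i))).natDegree = k := by
  rw [Polynomial.natDegree_prod _ _ (fun i _ => Polynomial.X_sub_C_ne_zero (a i))]
  simp [Polynomial.natDegree_X_sub_C]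

lemma monic_basis (k : ℕ) : (∏ i ∈ Finset.range k, (X - C (a i))).Monic :=
  Polynomial.monic_prod_of_monic _ _ (fun i _ => Polynomial.monic_X_sub_C (a i))

/-- Linear independence of the basis polynomials. -/
lemma lin_indep : ∀ (N : ℕ) (c : ℕ → ℝ),
    (∑ k ∈ Finset.range N, C (c k) * ∏ i ∈ Finset.range k, (X - C (a i))) = 0 →
    ∀ k < N, c k = 0 := by
  intro N
  induction N with
  | zero => intro c _ k hk; omega
  | succ N ih =>
    intro c hc k hk
    have hcN : c N = 0 := by
      have := congrArg (fun p => Polynomial.coeff p N) hc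
      simp only [Polynomial.finset_sum_coeff, Polynomial.coeff_zero] at this
      rw [Finset.sum_eq_single N] at this
      · have hco : (∏ i ∈ Finset.range N, (X - C (a i))).coeff N = 1 := by
          have h := (monic_basis a N).coeff_natDegree
          rwa [natDegree_basis] at h
        rw [Polynomial.coeff_C_mul, hco, mul_one] at this
        exact this
      · intro b hb hbN
        have hb' : b < N := by
          have := Finset.mem_range.mp hb; omega
        rw [Polynomial.coeff_C_mul,
          Polynomial.coeff_eq_zero_of_natDegree_lt (by rw [natDegree_basis]; omega), mul_zero]
      · intro h; exact absurd (Finset.mem_range.mpr (by omega)) h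
    rcases Nat.lt_or_ge k N with hkN | hkN
    · apply ih c _ k hkN
      rw [Finset.sum_range_succ, hcN] at hc
      simpa using hc
    · have : k = N := by omega
      rw [this]; exact hcN

lemma cob_spec (m : ℕ) :
    (∏ i ∈ Finset.range m, (X - C (e i))) =
      ∑ k ∈ Finset.range (m+1), C (cob a e m k) * ∏ i ∈ Finset.range k, (X - C (a i)) := by
  induction m with
  | zero => simp [cob]
  | succ m ih =>
    rw [Finset.prod_range_succ, ih, Finset.sum_mul]
    have key : ∀ k : ℕ,
        (C (cob a e m k) * ∏ i ∈ Finset.range k, (X - C (a i))) * (X - C (e m)) =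
        C (cob a e m k) * ∏ i ∈ Finset.range (k+1), (X - C (a i))
          + C ((a k - e m) * cob a e m k) * ∏ i ∈ Finset.range k, (X - C (a i)) := by
      intro k
      rw [Finset.prod_range_succ, map_mul, map_sub]
      ring
    rw [Finset.sum_congr rfl (fun k _ => key k), Finset.sum_add_distrib]
    -- RHS: peel off the k = 0 term
    rw [Finset.sum_range_succ' (fun k => C (cob a e (m+1) k) * ∏ i ∈ Finset.range k, (X - C (a i))) (m+1)]
    have hc0 : cob a e (m+1) 0 = (a 0 - e m) * cob a e m 0 := rfl
    have hcs : ∀ k : ℕ, cob a e (m+1) (k+1) = cob a e m k + (a (k+1) - e m) * cob a e m (k+1) :=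
      fun k => rfl
    have expand : ∀ k : ℕ, C (cob a e (m+1) (k+1)) * ∏ i ∈ Finset.range (k+1), (X - C (a i)) =
        C (cob a e m k) * ∏ i ∈ Finset.range (k+1), (X - C (a i))
          + C ((a (k+1) - e m) * cob a e m (k+1)) * ∏ i ∈ Finset.range (k+1), (X - C (a i)) := by
      intro k
      rw [hcs k, map_add]
      ring
    rw [Finset.sum_congr rfl (fun k _ => expand k), Finset.sum_add_distrib]
    -- second sums:
    have hsecond : (∑ k ∈ Finset.range (m+1),
          C ((a k - e m) * cob a e m k) * ∏ i ∈ Finset.range k, (X - C (a i))) =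
        (∑ k ∈ Finset.range (m+1),
          C ((a (k+1) - e m) * cob a e m (k+1)) * ∏ i ∈ Finset.range (k+1), (X - C (a i)))
          + C (cob a e (m+1) 0) * ∏ i ∈ Finset.range 0, (X - C (a i)) := by
      rw [Finset.sum_range_succ' (fun k => C ((a k - e m) * cob a e m k) * ∏ i ∈ Finset.range k, (X - C (a i))) m]
      rw [Finset.sum_range_succ (fun k => C ((a (k+1) - e m) * cob a e m (k+1)) * ∏ i ∈ Finset.range (k+1), (X - C (a i))) m]
      rw [cob_eq_zero a e m (m+1) (by omega), hc0]
      simp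
    rw [hsecond]
    ring

/-- Any matrix satisfying `IsCOB` agrees with `cob`. -/
lemma isCOB_eq {n : ℕ} {M : Matrix (Fin (n+1)) (Fin (n+1)) ℝ} (hM : IsCOB n a e M)
    (m k : Fin (n+1)) : M m k = cob a e (m : ℕ) (k : ℕ) := by
  classical
  set c : ℕ → ℝ := fun j => (if h : j < n + 1 then M m ⟨j, h⟩ else 0) - cob a e (m : ℕ) j with hc
  have hsum : (∑ j ∈ Finset.range (n+1), C (c j) * ∏ i ∈ Finset.range j, (X - C (a i))) = 0 := by
    have h1 := hM m
    have h2 := cob_spec a e (m : ℕ)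
    have h2' : (∏ i ∈ Finset.range (m : ℕ), (X - C (e i))) =
        ∑ j ∈ Finset.range (n+1), C (cob a e (m : ℕ) j) * ∏ i ∈ Finset.range j, (X - C (a i)) := by
      rw [h2]
      apply Finset.sum_subset
      · intro x hx
        rw [Finset.mem_range] at *
        have := m.isLt
        omega
      · intro x _ hx
        rw [Finset.mem_range] at hx
        rw [cob_eq_zero a e (m : ℕ) x (by omega)]
        simp
    have h1' : (∏ i ∈ Finset.range (m : ℕ), (X - C (e i))) =
        ∑ j ∈ Finset.range (n+1), C (if h : j < n + 1 then M m ⟨j, h⟩ else 0) *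
          ∏ i ∈ Finset.range j, (X - C (a i)) := by
      rw [h1, ← Fin.sum_univ_eq_sum_range (fun j => C (if h : j < n + 1 then M m ⟨j, h⟩ else 0) *
        ∏ i ∈ Finset.range j, (X - C (a i))) (n+1)]
      apply Finset.sum_congr rfl
      intro j _
      rw [dif_pos j.isLt, Fin.eta]
    have : (∑ j ∈ Finset.range (n+1), C (c j) * ∏ i ∈ Finset.range j, (X - C (a i))) =
        (∑ j ∈ Finset.range (n+1), C (if h : j < n + 1 then M m ⟨j, h⟩ else 0) *
          ∏ i ∈ Finset.range j, (X - C (a i)))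
        - (∑ j ∈ Finset.range (n+1), C (cob a e (m : ℕ) j) *
          ∏ i ∈ Finset.range j, (X - C (a i))) := by
      rw [← Finset.sum_sub_distrib]
      apply Finset.sum_congr rfl
      intro j _
      rw [hc]
      simp only [map_sub]
      ring
    rw [this, ← h1', ← h2', sub_self]
  have := lin_indep a (n+1) c hsum (k : ℕ) k.isLt
  rw [hc] at this
  simp only [dif_pos k.isLt] at this
  have h := sub_eq_zero.mp this
  simpa using h

lemma filter_le_orderEmbOfFin (S : Finset ℕ) {d : ℕ} (hc : S.card = d) (j : Fin d) :
    (S.filter (· ≤ S.orderEmbOfFin hc j)).card = (j : ℕ) + 1 := by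
  have hrange := Finset.range_orderEmbOfFin S hc
  have himg : S.filter (· ≤ S.orderEmbOfFin hc j)
      = (Finset.Iic j).image (fun i => S.orderEmbOfFin hc i) := by
    ext x
    simp only [Finset.mem_filter, Finset.mem_image, Finset.mem_Iic]
    constructor
    · rintro ⟨hxS, hxle⟩
      have : x ∈ Set.range (S.orderEmbOfFin hc) := by rw [hrange]; exact hxS
      obtain ⟨i, rfl⟩ := this
      exact ⟨i, (OrderEmbedding.le_iff_le _).mp hxle, rfl⟩
    · rintro ⟨i, hij, rfl⟩
      exact ⟨Finset.orderEmbOfFin_mem S hc i, (OrderEmbedding.le_iff_le _).mpr hij⟩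
  rw [himg, Finset.card_image_of_injective _ (S.orderEmbOfFin hc).injective, Fin.card_Iic]

lemma prod_fin_eq_P (S : Finset ℕ) {d : ℕ} (hc : S.card = d) :
    (∏ j : Fin d, (a (S.orderEmbOfFin hc j - (j : ℕ) - 1) - e (S.orderEmbOfFin hc j - 1)))
      = P a e S := by
  rw [P]
  rw [← Finset.prod_attach S (fun x => a (x - (S.filter (· ≤ x)).card) - e (x - 1))]
  apply Finset.prod_nbij' (fun j => ⟨S.orderEmbOfFin hc j, Finset.orderEmbOfFin_mem S hc j⟩)
    (fun x => (Finset.orderIsoOfFin S hc).symm ⟨x.1, x.2⟩)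
  · intro j _; exact Finset.mem_attach _ _
  · intro x _; exact Finset.mem_univ _
  · intro j _
    have : ((Finset.orderIsoOfFin S hc) j : ℕ) = S.orderEmbOfFin hc j := rfl
    apply (Finset.orderIsoOfFin S hc).symm_apply_apply
  · intro x _
    have := (Finset.orderIsoOfFin S hc).apply_symm_apply ⟨x.1, x.2⟩
    simp only [Subtype.ext_iff] at this ⊢
    exact this
  · intro j _
    rw [filter_le_orderEmbOfFin S hc j]
    rw [Nat.sub_sub]

end Statement6Aux

theorem statement6 (n : ℕ) (a e : ℕ → ℝ)
    (M : Matrix (Fin (n+1)) (Fin (n+1)) ℝ) (hM : IsCOB n a e M)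
    (m k : ℕ) (hk : k ≤ m) (hm : m ≤ n) :
    M ⟨m, by omega⟩ ⟨k, by omega⟩ =
      ∑ S ∈ ((Finset.Icc 1 m).powersetCard (m - k)).attach,
        ∏ j : Fin (m - k),
          (a (S.1.orderEmbOfFin (Finset.mem_powersetCard.mp S.2).2 j - (j : ℕ) - 1) -
            e (S.1.orderEmbOfFin (Finset.mem_powersetCard.mp S.2).2 j - 1)) := by
  rw [Statement6Aux.isCOB_eq a e hM ⟨m, by omega⟩ ⟨k, by omega⟩]
  simp only []
  rw [Statement6Aux.cob_eq_Hf a e m k hk, Statement6Aux.Hf]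
  rw [← Finset.sum_attach ((Finset.Icc 1 m).powersetCard (m - k)) (fun S => Statement6Aux.P a e S)]
  exact Finset.sum_congr rfl fun S _ => (Statement6Aux.prod_fin_eq_P a e S.1 _).symm
end

section
/- For every n, the (n+1)×(n+1) matrix whose (m,k) entry (0 ≤ m,k ≤ n) is the binomial coefficient C(m,k) is totally non-negative. -/
open Polynomial Finset

/-- The Pascal matrix. -/
def pasc (N : ℕ) : Matrix (Fin N) (Fin N) ℝ :=
  Matrix.of fun m k => ((m : ℕ).choose (k : ℕ) : ℝ)

/-- Adding row `j` to row `i = j+1` preserves total nonnegativity. -/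
lemma tnn_rowadd {N : ℕ} {A : Matrix (Fin N) (Fin N) ℝ} (hA : TNN A)
    (i j : Fin N) (hij : (j : ℕ) + 1 = (i : ℕ)) :
    TNN (Matrix.of fun m k => A m k + if m = i then A j k else 0) := by
  intro r ρ γ hρ hγ
  by_cases h : ∃ t, ρ t = i
  · obtain ⟨t, ht⟩ := h
    have hsub : (Matrix.of fun m k => A m k + if m = i then A j k else 0).submatrix ρ γ
        = Matrix.updateRow (A.submatrix ρ γ) t ((fun l => A i (γ l)) + fun l => A j (γ l)) := by
      ext s l
      by_cases hs : s = t
      · subst hs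
        simp [Matrix.updateRow_self, ht]
      · rw [Matrix.updateRow_ne hs]
        have hne : ρ s ≠ i := fun hh => hs (hρ.injective (hh.trans ht.symm))
        simp [hne]
    rw [hsub, Matrix.det_updateRow_add]
    have h1 : Matrix.updateRow (A.submatrix ρ γ) t (fun l => A i (γ l)) = A.submatrix ρ γ := by
      have : (fun l => A i (γ l)) = (A.submatrix ρ γ) t := by
        ext l; simp [ht]
      rw [this, Matrix.updateRow_eq_self]
    rw [h1]
    set ρ' : Fin r → Fin N := Function.update ρ t j with hρ'
    have hvt : (ρ' t : ℕ) = (j : ℕ) := by simp [ρ']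
    have hvo : ∀ s, s ≠ t → (ρ' s : ℕ) = (ρ s : ℕ) := by
      intro s hs
      simp [ρ', Function.update_of_ne hs]
    have h2 : Matrix.updateRow (A.submatrix ρ γ) t (fun l => A j (γ l)) = A.submatrix ρ' γ := by
      ext s l
      by_cases hs : s = t
      · subst hs; simp [ρ', Matrix.updateRow_self]
      · rw [Matrix.updateRow_ne hs]
        simp [ρ', Function.update_of_ne hs]
    rw [h2]
    have hji : (j : ℕ) < (i : ℕ) := by omega
    by_cases hj : ∃ s, ρ s = j
    · obtain ⟨s, hs⟩ := hj
      have hst : s ≠ t := by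
        intro hh; subst hh; rw [ht] at hs
        exact absurd (congrArg (Fin.val) hs) (by omega)
      have : (A.submatrix ρ' γ) s = (A.submatrix ρ' γ) t := by
        ext l
        simp [ρ', Function.update_of_ne hst, Function.update_self, hs]
      rw [Matrix.det_zero_of_row_eq hst this]
      simpa using hA r ρ γ hρ hγ
    · have hρ'mono : StrictMono ρ' := by
        intro a b hab
        rw [Fin.lt_def]
        have h5 : (ρ a : ℕ) < (ρ b : ℕ) := Fin.lt_def.mp (hρ hab)
        by_cases hat : a = t
        · have hbt : b ≠ t := by rw [← hat]; exact (ne_of_lt hab).symm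
          have h6 : (ρ a : ℕ) = (i : ℕ) := by rw [hat, ht]
          rw [hat, hvt, hvo b hbt]
          omega
        · by_cases hbt : b = t
          · have h6 : (ρ b : ℕ) = (i : ℕ) := by rw [hbt, ht]
            have h7 : (ρ a : ℕ) ≠ (j : ℕ) := fun hh => hj ⟨a, Fin.ext hh⟩
            rw [hbt, hvt, hvo a hat]
            omega
          · rw [hvo a hat, hvo b hbt]
            exact h5
      have := hA r ρ' γ hρ'mono hγ
      have h0 := hA r ρ γ hρ hγ
      linarith
  · have hsub : (Matrix.of fun m k => A m k + if m = i then A j k else 0).submatrix ρ γ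
        = A.submatrix ρ γ := by
      ext s l
      have hne : ρ s ≠ i := fun hh => h ⟨s, hh⟩
      simp [hne]
    rw [hsub]; exact hA r ρ γ hρ hγ

/-- The intermediate matrices: rows `0..s` are Pascal rows, the remaining rows are
shifted Pascal rows. -/
def gmat (n s : ℕ) : Matrix (Fin (n+2)) (Fin (n+2)) ℝ :=
  Matrix.of fun m k =>
    ((if (m : ℕ) ≤ s then (m : ℕ).choose (k : ℕ)
      else if (k : ℕ) = 0 then 0 else ((m : ℕ) - 1).choose ((k : ℕ) - 1) : ℕ) : ℝ)

lemma gmat_step (n s : ℕ) (hs : s + 1 ≤ n + 1) :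
    gmat n (s+1) = Matrix.of fun m k => gmat n s m k +
      if m = (⟨s+1, by omega⟩ : Fin (n+2)) then gmat n s ⟨s, by omega⟩ k else 0 := by
  ext m k
  simp only [gmat, Matrix.of_apply]
  rcases lt_trichotomy (m : ℕ) (s+1) with hm | hm | hm
  · have h1 : (m : ℕ) ≤ s + 1 := by omega
    have h2 : (m : ℕ) ≤ s := by omega
    have h3 : m ≠ (⟨s+1, by omega⟩ : Fin (n+2)) := by
      intro hh; have := congrArg Fin.val hh; simp at this; omega
    simp [h1, h2, h3]
  · have h1 : (m : ℕ) ≤ s + 1 := by omega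
    have h2 : ¬ (m : ℕ) ≤ s := by omega
    have h3 : m = (⟨s+1, by omega⟩ : Fin (n+2)) := Fin.ext hm
    have hnat : (s+1).choose (k : ℕ)
        = (if (k : ℕ) = 0 then 0 else s.choose ((k : ℕ) - 1)) + s.choose (k : ℕ) := by
      cases hk : (k : ℕ) with
      | zero => simp
      | succ k' => simp [Nat.choose_succ_succ, Nat.add_comm]
    rw [if_pos h1, if_neg h2, if_pos h3, hm]
    simp only [Nat.add_sub_cancel, Nat.le_refl, if_pos]
    rw [hnat]
    split_ifs <;> push_cast <;> ring
  · have h1 : ¬ (m : ℕ) ≤ s + 1 := by omega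
    have h2 : ¬ (m : ℕ) ≤ s := by omega
    have h3 : m ≠ (⟨s+1, by omega⟩ : Fin (n+2)) := by
      intro hh; have := congrArg Fin.val hh; simp at this; omega
    simp [h1, h2, h3]

lemma gmat_top (n : ℕ) : gmat n (n+1) = pasc (n+2) := by
  ext m k
  have : (m : ℕ) ≤ n + 1 := by omega
  simp [gmat, pasc, this]

/-- The minors of `gmat n 0` reduce to minors of the smaller Pascal matrix. -/
lemma gmat_zero_tnn (n : ℕ) (hn : TNN (pasc (n+1))) : TNN (gmat n 0) := by
  have gval0 : ∀ (m k : Fin (n+2)), (m : ℕ) = 0 →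
      gmat n 0 m k = ((0 : ℕ).choose (k : ℕ) : ℝ) := by
    intro m k hm
    simp [gmat, hm, show m = 0 from Fin.ext hm]
  have gval1 : ∀ (m k : Fin (n+2)), 1 ≤ (m : ℕ) →
      gmat n 0 m k = ((if (k : ℕ) = 0 then 0 else ((m : ℕ) - 1).choose ((k : ℕ) - 1) : ℕ) : ℝ) := by
    intro m k hm
    have h0 : ¬ (m : ℕ) = 0 := by omega
    simp [gmat, h0, show m ≠ 0 from fun h => h0 (by simp [h])]
  have key : ∀ (r : ℕ) (ρ γ : Fin r → Fin (n+2)), StrictMono ρ → StrictMono γ →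
      (∀ i, 1 ≤ (ρ i : ℕ)) → (∀ j, 1 ≤ (γ j : ℕ)) →
      0 ≤ ((gmat n 0).submatrix ρ γ).det := by
    intro r ρ γ hρ hγ hρ1 hγ1
    set ρ' : Fin r → Fin (n+1) := fun i => ⟨(ρ i : ℕ) - 1, by have := (ρ i).isLt; have := hρ1 i; omega⟩
      with hρ'def
    set γ' : Fin r → Fin (n+1) := fun j => ⟨(γ j : ℕ) - 1, by have := (γ j).isLt; have := hγ1 j; omega⟩
      with hγ'def
    have hsub : (gmat n 0).submatrix ρ γ = (pasc (n+1)).submatrix ρ' γ' := by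
      ext i j
      have h2 : ¬ (γ j : ℕ) = 0 := by have := hγ1 j; omega
      rw [Matrix.submatrix_apply, gval1 _ _ (hρ1 i), if_neg h2]
      simp [pasc, ρ', γ']
    rw [hsub]
    apply hn r ρ' γ'
    · intro a b hab
      have h5 := Fin.lt_def.mp (hρ hab)
      have h6 := hρ1 a
      exact Fin.lt_def.mpr (by simp only [ρ']; omega)
    · intro a b hab
      have h5 := Fin.lt_def.mp (hγ hab)
      have h6 := hγ1 a
      exact Fin.lt_def.mpr (by simp only [γ']; omega)
  intro r ρ γ hρ hγ
  match r with
  | 0 => simp [Matrix.det_fin_zero]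
  | r + 1 =>
    rcases Nat.eq_zero_or_pos (ρ 0 : ℕ) with hρ0 | hρ0
    · rcases Nat.eq_zero_or_pos (γ 0 : ℕ) with hγ0 | hγ0
      · -- both start at 0: expand along the first row
        rw [Matrix.det_succ_row_zero]
        have hterm : ∀ j : Fin (r+1), j ≠ 0 →
            (-1 : ℝ) ^ (j : ℕ) * ((gmat n 0).submatrix ρ γ) 0 j *
              (((gmat n 0).submatrix ρ γ).submatrix Fin.succ j.succAbove).det = 0 := by
          intro j hj
          have h1 : (γ 0 : ℕ) < (γ j : ℕ) := Fin.lt_def.mp (hγ (Fin.pos_of_ne_zero hj))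
          have : ((gmat n 0).submatrix ρ γ) 0 j = 0 := by
            rw [Matrix.submatrix_apply, gval0 _ _ hρ0]
            rw [Nat.choose_eq_zero_of_lt (by omega)]
            simp
          rw [this]; ring
        rw [Finset.sum_eq_single 0 (fun j _ hj => hterm j hj) (by simp)]
        have hentry : ((gmat n 0).submatrix ρ γ) 0 0 = 1 := by
          rw [Matrix.submatrix_apply, gval0 _ _ hρ0, hγ0]
          simp
        rw [hentry]
        simp only [Fin.val_zero, pow_zero, one_mul, mul_one, Fin.succAbove_zero]
        have heq : ((gmat n 0).submatrix ρ γ).submatrix Fin.succ Fin.succ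
            = (gmat n 0).submatrix (ρ ∘ Fin.succ) (γ ∘ Fin.succ) := rfl
        rw [heq]
        apply key r _ _ (hρ.comp Fin.strictMono_succ) (hγ.comp Fin.strictMono_succ)
        · intro i
          have := Fin.lt_def.mp (hρ (Fin.succ_pos i))
          simp only [Function.comp]; omega
        · intro j
          have := Fin.lt_def.mp (hγ (Fin.succ_pos j))
          simp only [Function.comp]; omega
      · -- first row is zero
        have hzero : ∀ j, ((gmat n 0).submatrix ρ γ) 0 j = 0 := by
          intro j
          have h1 : 1 ≤ (γ j : ℕ) := by
            rcases eq_or_ne j 0 with rfl | hj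
            · omega
            · have := Fin.lt_def.mp (hγ (Fin.pos_of_ne_zero hj)); omega
          rw [Matrix.submatrix_apply, gval0 _ _ hρ0]
          rw [Nat.choose_eq_zero_of_lt (by omega)]
          simp
        rw [Matrix.det_eq_zero_of_row_eq_zero 0 hzero]
    · rcases Nat.eq_zero_or_pos (γ 0 : ℕ) with hγ0 | hγ0
      · -- first column is zero
        have hzero : ∀ i, ((gmat n 0).submatrix ρ γ) i 0 = 0 := by
          intro i
          have h1 : 1 ≤ (ρ i : ℕ) := by
            rcases eq_or_ne i 0 with rfl | hi
            · omega
            · have := Fin.lt_def.mp (hρ (Fin.pos_of_ne_zero hi)); omega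
          rw [Matrix.submatrix_apply, gval1 _ _ h1, hγ0]
          simp
        rw [Matrix.det_eq_zero_of_column_eq_zero 0 hzero]
      · apply key _ _ _ hρ hγ
        · intro i
          rcases eq_or_ne i 0 with rfl | hi
          · omega
          · have := Fin.lt_def.mp (hρ (Fin.pos_of_ne_zero hi)); omega
        · intro j
          rcases eq_or_ne j 0 with rfl | hj
          · omega
          · have := Fin.lt_def.mp (hγ (Fin.pos_of_ne_zero hj)); omega

theorem statement16 (n : ℕ) :
    TNN (Matrix.of fun m k : Fin (n+1) => ((m : ℕ).choose (k : ℕ) : ℝ)) := by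
  induction n with
  | zero =>
    intro r ρ γ hρ hγ
    match r with
    | 0 => simp [Matrix.det_fin_zero]
    | 1 =>
      rw [Matrix.det_fin_one]
      have h1 : (ρ 0 : ℕ) = 0 := by have := (ρ 0).isLt; omega
      have h2 : (γ 0 : ℕ) = 0 := by have := (γ 0).isLt; omega
      simp [Matrix.submatrix_apply, h1, h2]
    | r + 2 =>
      have h := Fin.lt_def.mp (hρ (show (0 : Fin (r+2)) < 1 by simp [Fin.lt_def]))
      have := (ρ 0).isLt
      have := (ρ 1).isLt
      omega
  | succ n ih =>
    have key : ∀ s, s ≤ n + 1 → TNN (gmat n s) := by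
      intro s
      induction s with
      | zero => intro _; exact gmat_zero_tnn n ih
      | succ s ihs =>
        intro hs
        rw [gmat_step n s hs]
        exact tnn_rowadd (ihs (by omega)) ⟨s+1, by omega⟩ ⟨s, by omega⟩ rfl
    have h := key (n+1) le_rfl
    rw [gmat_top] at h
    exact h
end
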